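/- Let H be a complex Hilbert space, π : ℤ → U(H) a unitary representation (i.e., π(k+l) = π(k)π(l), π(0) = id), and φ ∈ H. For a positive integer T let β_T(φ) = (1/(2T+1)) ∑_{|k|≤T} π(k)φ. Suppose there exist constants M > 0 and s ∈ (0,1) such that |⟨π(k)φ, φ⟩| ≤ M·|k|^{-s} for all nonzero integers k. Then ‖β_T(φ)‖² ≤ C·M·T^{-s} + ‖φ‖²/(2T+1) for some absolute constant C depending only on s. -/

import Mathlib

open Finset

lemma sum_rpow_bound (s : ℝ) (hs0 : 0 < s) (hs1 : s < 1) (N : ℕ) (hN : 1 ≤ N) :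
    ∑ m ∈ Finset.Icc 1 N, ((m : ℝ)) ^ (-s) ≤ (1 + 1 / (1 - s)) * (N : ℝ) ^ (1 - s) := by
  have h1s : 0 < 1 - s := by linarith
  have hanti : AntitoneOn (fun x : ℝ => x ^ (-s)) (Set.Icc (1:ℝ) (1 + (N - 1 : ℕ))) := by
    intro x hx y hy hxy
    exact Real.rpow_le_rpow_of_nonpos (lt_of_lt_of_le one_pos hx.1) hxy (by linarith)
  have key := hanti.sum_le_integral
  have hcast : ((N - 1 : ℕ) : ℝ) = (N : ℝ) - 1 := by
    push_cast [Nat.cast_sub hN]; ring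
  have hint : ∫ x in (1:ℝ)..(1 + (N - 1 : ℕ)), x ^ (-s) ≤ (N : ℝ) ^ (1 - s) / (1 - s) := by
    rw [hcast]
    have h2 : (1 : ℝ) + ((N:ℝ) - 1) = N := by ring
    rw [h2, integral_rpow (Or.inl (by linarith))]
    have h1 : (1:ℝ) ^ (-s + 1) = 1 := Real.one_rpow _
    rw [h1]
    have h3 : -s + 1 = 1 - s := by ring
    rw [h3]
    have hNpow : (0:ℝ) ≤ (N : ℝ) ^ (1 - s) := Real.rpow_nonneg (by positivity) _
    rw [div_le_div_iff₀ (by linarith) (by linarith)]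
    nlinarith
  have hsum : ∑ i ∈ Finset.range (N - 1), ((1 : ℝ) + ((i : ℕ) + 1 : ℕ)) ^ (-s)
      = ∑ m ∈ Finset.Icc 2 N, ((m : ℝ)) ^ (-s) := by
    rw [show Finset.Icc 2 N = Finset.Ico 2 (N+1) by rw [Finset.Ico_add_one_right_eq_Icc],
      Finset.sum_Ico_eq_sum_range]
    apply Finset.sum_congr (by rw [show N + 1 - 2 = N - 1 from by omega])
    intro i _
    push_cast
    ring_nf
  have hsplit : ∑ m ∈ Finset.Icc 1 N, ((m : ℝ)) ^ (-s)
      = 1 + ∑ m ∈ Finset.Icc 2 N, ((m : ℝ)) ^ (-s) := by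
    rw [show Finset.Icc 1 N = insert 1 (Finset.Icc 2 N) by ext x; simp [Finset.mem_Icc]; omega]
    rw [Finset.sum_insert (by simp)]
    norm_num
  have hone : (1:ℝ) ≤ (N : ℝ) ^ (1 - s) :=
    Real.one_le_rpow (by exact_mod_cast hN) (by linarith)
  have hfin : ∑ m ∈ Finset.Icc 2 N, ((m : ℝ)) ^ (-s) ≤ (N : ℝ) ^ (1 - s) / (1 - s) := by
    calc _ = ∑ i ∈ Finset.range (N - 1), ((1 : ℝ) + ((i : ℕ) + 1 : ℕ)) ^ (-s) := hsum.symm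
    _ ≤ _ := le_trans key hint
  rw [hsplit]
  have : (N : ℝ) ^ (1 - s) / (1 - s) = (1/(1-s)) * (N : ℝ) ^ (1 - s) := by ring
  nlinarith
open scoped InnerProductSpace

lemma inner_shift {H : Type} [NormedAddCommGroup H] [InnerProductSpace ℂ H]
    (π : ℤ → (H ≃ₗᵢ[ℂ] H)) (hmul : ∀ k l : ℤ, π (k + l) = (π k).trans (π l))
    (h0 : π 0 = LinearIsometryEquiv.refl ℂ H) (φ : H) (k l : ℤ) :
    (inner ℂ (π k φ) (π l φ) : ℂ) = inner ℂ (π (k - l) φ) φ := by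
  have h1 : π (-l) (π l φ) = φ := by
    have e : π (l + -l) φ = π (-l) (π l φ) := by rw [hmul]; rfl
    rw [show l + -l = (0:ℤ) by ring, h0] at e
    simpa using e.symm
  have h2 : π (-l) (π k φ) = π (k - l) φ := by
    have e : π (k + -l) φ = π (-l) (π k φ) := by rw [hmul]; rfl
    rw [show k + -l = k - l by ring] at e
    exact e.symm
  calc (inner ℂ (π k φ) (π l φ) : ℂ)
      = inner ℂ (π (-l) (π k φ)) (π (-l) (π l φ)) := ((π (-l)).inner_map_map _ _).symm
    _ = inner ℂ (π (k - l) φ) φ := by rw [h1, h2]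

set_option maxHeartbeats 1000000 in
theorem effective_mean_ergodic_abstract (s : ℝ) (hs : s ∈ Set.Ioo (0 : ℝ) 1) :
    ∃ C > 0, ∀ (H : Type) (_ : NormedAddCommGroup H) (_ : InnerProductSpace ℂ H),
      ∀ (π : ℤ → (H ≃ₗᵢ[ℂ] H)),
        (∀ k l : ℤ, π (k + l) = (π k).trans (π l)) →
        π 0 = LinearIsometryEquiv.refl ℂ H →
        ∀ (φ : H) (M : ℝ), 0 < M →
          (∀ k : ℤ, k ≠ 0 → ‖(inner ℂ (π k φ) φ : ℂ)‖ ≤ M * (|k| : ℝ) ^ (-s)) →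
          ∀ T : ℕ, 1 ≤ T →
            ‖(1 / ((2 * T + 1 : ℕ) : ℂ)) •
                ∑ k ∈ Finset.Icc (-(T : ℤ)) T, π k φ‖ ^ 2 ≤
              C * M * (T : ℝ) ^ (-s) + ‖φ‖ ^ 2 / (2 * T + 1) := by
  obtain ⟨hs0, hs1⟩ := hs
  have h1s : 0 < 1 - s := by linarith
  set A : ℝ := 2 * (1 + 1 / (1 - s)) with hA_def
  have hA : 0 < A := by positivity
  refine ⟨A, hA, ?_⟩
  intro H _ _ π hmul h0 φ M hM hbound T hT
  set I : Finset ℤ := Finset.Icc (-(T : ℤ)) T with hI_def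
  set S : H := ∑ k ∈ I, π k φ with hS_def
  set f : ℤ → ℝ := fun d => ‖(inner ℂ (π d φ) φ : ℂ)‖ with hf_def
  have hf_nonneg : ∀ d, 0 ≤ f d := fun d => norm_nonneg _
  set J : Finset ℤ := Finset.Icc (-(2 * T : ℤ)) (2 * T) with hJ_def
  have hcard : I.card = 2 * T + 1 := by
    rw [hI_def, Int.card_Icc]; omega
  -- Step 2: norm squared bound by double sum
  have hS2 : ‖S‖ ^ 2 ≤ ∑ k ∈ I, ∑ l ∈ I, f (k - l) := by
    have e1 : ‖S‖ ^ 2 = RCLike.re (inner ℂ S S : ℂ) := (inner_self_eq_norm_sq (𝕜 := ℂ) S).symm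
    have e2 : (inner ℂ S S : ℂ) = ∑ k ∈ I, ∑ l ∈ I, (inner ℂ (π k φ) (π l φ) : ℂ) := by
      rw [hS_def, sum_inner]
      exact Finset.sum_congr rfl fun k _ => inner_sum _ _ _
    rw [e1, e2]
    calc RCLike.re (∑ k ∈ I, ∑ l ∈ I, (inner ℂ (π k φ) (π l φ) : ℂ))
        ≤ ‖∑ k ∈ I, ∑ l ∈ I, (inner ℂ (π k φ) (π l φ) : ℂ)‖ := RCLike.re_le_norm _
      _ ≤ ∑ k ∈ I, ‖∑ l ∈ I, (inner ℂ (π k φ) (π l φ) : ℂ)‖ := norm_sum_le _ _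
      _ ≤ ∑ k ∈ I, ∑ l ∈ I, ‖(inner ℂ (π k φ) (π l φ) : ℂ)‖ :=
          Finset.sum_le_sum fun k _ => norm_sum_le _ _
      _ = ∑ k ∈ I, ∑ l ∈ I, f (k - l) := by
          refine Finset.sum_congr rfl fun k _ => Finset.sum_congr rfl fun l _ => ?_
          rw [inner_shift π hmul h0 φ k l]
  -- Step 3: inner sum bounded by sum over J
  have hstep3 : ∀ k ∈ I, ∑ l ∈ I, f (k - l) ≤ ∑ d ∈ J, f d := by
    intro k hk
    rw [hI_def, Finset.mem_Icc] at hk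
    have hinj : ∀ x ∈ I, ∀ y ∈ I, k - x = k - y → x = y := by
      intro x _ y _ h; omega
    rw [← Finset.sum_image hinj]
    apply Finset.sum_le_sum_of_subset_of_nonneg
    · intro d hd
      simp only [Finset.mem_image, hI_def, Finset.mem_Icc] at hd
      obtain ⟨l, hl, rfl⟩ := hd
      rw [hJ_def, Finset.mem_Icc]
      omega
    · intro d _ _; exact hf_nonneg d
  -- Step 4: sum over J
  set K : ℝ := ∑ m ∈ Finset.Icc 1 (2 * T), ((m : ℕ) : ℝ) ^ (-s) with hK_def
  have hK0 : 0 ≤ K := Finset.sum_nonneg fun m _ => Real.rpow_nonneg (Nat.cast_nonneg m) _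
  have hstep4 : ∑ d ∈ J, f d ≤ ‖φ‖ ^ 2 + 2 * M * K := by
    have h0J : (0 : ℤ) ∈ J := by rw [hJ_def, Finset.mem_Icc]; omega
    have hf0 : f 0 = ‖φ‖ ^ 2 := by
      rw [hf_def]
      simp only [h0, LinearIsometryEquiv.coe_refl, id_eq]
      rw [@inner_self_eq_norm_sq_to_K ℂ]
      simp [Complex.norm_real]
    rw [← Finset.sum_erase_add J f h0J, hf0]
    have hsplit : J.erase 0 = Finset.Icc (-(2 * T : ℤ)) (-1) ∪ Finset.Icc 1 (2 * T) := by
      ext d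
      simp only [Finset.mem_erase, hJ_def, Finset.mem_Icc, Finset.mem_union]
      omega
    have hdisj : Disjoint (Finset.Icc (-(2 * T : ℤ)) (-1)) (Finset.Icc 1 (2 * T)) := by
      rw [Finset.disjoint_left]
      intro a ha hb
      rw [Finset.mem_Icc] at ha hb
      omega
    have hbd : ∀ d ∈ J.erase 0, f d ≤ M * (|d| : ℝ) ^ (-s) := by
      intro d hd
      exact hbound d (Finset.mem_erase.1 hd).1
    have h1 : ∑ d ∈ J.erase 0, f d ≤ ∑ d ∈ J.erase 0, M * (|d| : ℝ) ^ (-s) :=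
      Finset.sum_le_sum hbd
    have hneg : ∑ d ∈ Finset.Icc (-(2 * T : ℤ)) (-1), M * (|d| : ℝ) ^ (-s)
        = ∑ d ∈ Finset.Icc (1 : ℤ) (2 * T), M * (|d| : ℝ) ^ (-s) := by
      refine Finset.sum_nbij' (fun d => -d) (fun d => -d) ?_ ?_ ?_ ?_ ?_
      · intro a ha; simp only [Finset.mem_Icc] at ha ⊢; omega
      · intro a ha; simp only [Finset.mem_Icc] at ha ⊢; omega
      · intro a _; ring
      · intro a _; ring
      · intro a _; push_cast; rw [abs_neg]
    have hpos : ∑ d ∈ Finset.Icc (1 : ℤ) (2 * T), M * (|d| : ℝ) ^ (-s) = M * K := by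
      rw [hK_def, Finset.mul_sum]
      refine Finset.sum_nbij' (fun d : ℤ => d.toNat) (fun m : ℕ => (m : ℤ)) ?_ ?_ ?_ ?_ ?_
      · intro a ha; simp only [Finset.mem_Icc] at ha ⊢; omega
      · intro a ha; simp only [Finset.mem_Icc] at ha ⊢; omega
      · intro a ha; simp only [Finset.mem_Icc] at ha; omega
      · intro a ha; simp only [Finset.mem_Icc] at ha; omega
      · intro a ha
        rw [Finset.mem_Icc] at ha
        have h0 : (a.toNat : ℤ) = a := Int.toNat_of_nonneg (by omega)
        have h1 : ((a.toNat : ℕ) : ℝ) = ((a : ℤ) : ℝ) := by exact_mod_cast congrArg (Int.cast : ℤ → ℝ) h0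
        rw [abs_of_nonneg (show (0:ℝ) ≤ ((a:ℤ):ℝ) by exact_mod_cast (by omega : (0:ℤ) ≤ a)), ← h1]
    have h2 : ∑ d ∈ J.erase 0, M * (|d| : ℝ) ^ (-s) = 2 * M * K := by
      rw [hsplit, Finset.sum_union hdisj, hneg, hpos]
      ring
    linarith
  -- Step 5: combine
  have hSb : ‖S‖ ^ 2 ≤ (2 * T + 1 : ℝ) * (‖φ‖ ^ 2 + 2 * M * K) := by
    calc ‖S‖ ^ 2 ≤ ∑ k ∈ I, ∑ l ∈ I, f (k - l) := hS2
      _ ≤ ∑ _k ∈ I, (‖φ‖ ^ 2 + 2 * M * K) :=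
          Finset.sum_le_sum fun k hk => le_trans (hstep3 k hk) hstep4
      _ = (2 * T + 1 : ℝ) * (‖φ‖ ^ 2 + 2 * M * K) := by
          rw [Finset.sum_const, hcard, nsmul_eq_mul]
          push_cast
          ring
  -- Step 6: K bound
  have hKb : K ≤ A * (T : ℝ) ^ (1 - s) := by
    have hb := sum_rpow_bound s hs0 hs1 (2 * T) (by omega)
    have h2T : ((2 * T : ℕ) : ℝ) = 2 * (T : ℝ) := by push_cast; ring
    have hmulr : ((2 * T : ℕ) : ℝ) ^ (1 - s) ≤ 2 * (T : ℝ) ^ (1 - s) := by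
      rw [h2T, Real.mul_rpow (by norm_num) (Nat.cast_nonneg T)]
      have h2le : (2 : ℝ) ^ (1 - s) ≤ 2 := by
        calc (2 : ℝ) ^ (1 - s) ≤ (2 : ℝ) ^ (1 : ℝ) :=
            Real.rpow_le_rpow_of_exponent_le one_le_two (by linarith)
          _ = 2 := Real.rpow_one 2
      have hTpow : (0 : ℝ) ≤ (T : ℝ) ^ (1 - s) := Real.rpow_nonneg (Nat.cast_nonneg T) _
      nlinarith
    calc K ≤ (1 + 1 / (1 - s)) * ((2 * T : ℕ) : ℝ) ^ (1 - s) := hb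
      _ ≤ (1 + 1 / (1 - s)) * (2 * (T : ℝ) ^ (1 - s)) := by
          apply mul_le_mul_of_nonneg_left hmulr
          positivity
      _ = A * (T : ℝ) ^ (1 - s) := by rw [hA_def]; ring
  -- final arithmetic
  have htpos : (0 : ℝ) < T := by exact_mod_cast hT
  have hP : (0 : ℝ) < (2 * T + 1 : ℝ) := by linarith
  have hnorm : ‖(1 / ((2 * T + 1 : ℕ) : ℂ))‖ = 1 / (2 * T + 1 : ℝ) := by
    rw [norm_div, norm_one, Complex.norm_natCast]
    push_cast
    ring
  rw [norm_smul, mul_pow, hnorm]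
  have hts : (T : ℝ) * (T : ℝ) ^ (-s) = (T : ℝ) ^ (1 - s) := by
    rw [show (1 : ℝ) - s = 1 + (-s) by ring, Real.rpow_add htpos, Real.rpow_one]
  have htneg : (0 : ℝ) < (T : ℝ) ^ (-s) := Real.rpow_pos_of_pos htpos _
  have hx : 2 * M * K ≤ (A * M * (T : ℝ) ^ (-s)) * (2 * T + 1 : ℝ) := by
    have h1 : 2 * M * K ≤ 2 * M * (A * (T : ℝ) ^ (1 - s)) := by nlinarith
    have h2 : (A * M * (T : ℝ) ^ (-s)) * (2 * T + 1 : ℝ)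
        ≥ (A * M * (T : ℝ) ^ (-s)) * (2 * T) := by nlinarith [mul_pos (mul_pos hA hM) htneg]
    nlinarith [mul_pos (mul_pos hA hM) htneg]
  have hfinal : (1 / (2 * T + 1 : ℝ)) ^ 2 * ‖S‖ ^ 2
      ≤ A * M * (T : ℝ) ^ (-s) + ‖φ‖ ^ 2 / (2 * T + 1 : ℝ) := by
    have hb2 : (1 / (2 * T + 1 : ℝ)) ^ 2 * ‖S‖ ^ 2
        ≤ (1 / (2 * T + 1 : ℝ)) ^ 2 * ((2 * T + 1 : ℝ) * (‖φ‖ ^ 2 + 2 * M * K)) := by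
      apply mul_le_mul_of_nonneg_left hSb
      positivity
    have heq : (1 / (2 * T + 1 : ℝ)) ^ 2 * ((2 * T + 1 : ℝ) * (‖φ‖ ^ 2 + 2 * M * K))
        = (‖φ‖ ^ 2 + 2 * M * K) / (2 * T + 1 : ℝ) := by
      field_simp
    rw [heq] at hb2
    have h2 : 2 * M * K / (2 * T + 1 : ℝ) ≤ A * M * (T : ℝ) ^ (-s) :=
      (div_le_iff₀ hP).2 hx
    have : (‖φ‖ ^ 2 + 2 * M * K) / (2 * T + 1 : ℝ)
        ≤ A * M * (T : ℝ) ^ (-s) + ‖φ‖ ^ 2 / (2 * T + 1 : ℝ) := by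
      rw [add_div]
      linarith
    linarith
  calc (1 / (2 * T + 1 : ℝ)) ^ 2 * ‖S‖ ^ 2
      ≤ A * M * (T : ℝ) ^ (-s) + ‖φ‖ ^ 2 / (2 * T + 1 : ℝ) := hfinal
    _ = A * M * (T : ℝ) ^ (-s) + ‖φ‖ ^ 2 / (2 * ↑T + 1) := by norm_num
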